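/- arXiv:1808.10555 — 7 statements merged into one kernel-verified Lean document; each statement's English description precedes it below -/
import Mathlib

section
/- Under Condition A, for every natural number j, the ratio of squared Jacobi weighted norms satisfies |‖G_j^{(α−β,β)}‖|² / |‖G_{j+1}^{(β−1,α−β−1)}‖|² = (j+1)/(j+α), and moreover 1/2 ≤ (j+1)/(j+α) ≤ 1. -/
open Real

/-- Squared weighted `L²` norm of the Jacobi polynomial `G_j^{(a,b)}` on `(0,1)`. -/
noncomputable def normG2 (a b : ℝ) (j : ℕ) : ℝ :=
  Real.Gamma ((j : ℝ) + a + 1) * Real.Gamma ((j : ℝ) + b + 1) /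
    ((2 * (j : ℝ) + a + b + 1) * Real.Gamma ((j : ℝ) + 1) * Real.Gamma ((j : ℝ) + a + b + 1))

theorem stmt8 (α β : ℝ)
    (hα₁ : 1 < α) (hα₂ : α < 2) (hβ₁ : α - 1 ≤ β) (hβ₂ : β ≤ 1) (j : ℕ) :
    normG2 (α - β) β j / normG2 (β - 1) (α - β - 1) (j + 1)
        = ((j : ℝ) + 1) / ((j : ℝ) + α)
      ∧ 1 / 2 ≤ ((j : ℝ) + 1) / ((j : ℝ) + α)
      ∧ ((j : ℝ) + 1) / ((j : ℝ) + α) ≤ 1 := by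
  have hj : (0 : ℝ) ≤ (j : ℝ) := Nat.cast_nonneg j
  have hβpos : 0 < β := lt_of_lt_of_le (by linarith) hβ₁
  have hαβ : 0 < α - β := by linarith
  have hjα : 0 < (j : ℝ) + α := by linarith
  constructor
  · have h1 : Real.Gamma ((j : ℝ) + α + 1) = ((j : ℝ) + α) * Real.Gamma ((j : ℝ) + α) := by
      have := Real.Gamma_add_one (ne_of_gt hjα)
      rw [show (j : ℝ) + α + 1 = (j : ℝ) + α + 1 from rfl] at this
      exact this
    have h2 : Real.Gamma ((j : ℝ) + 1 + 1) = ((j : ℝ) + 1) * Real.Gamma ((j : ℝ) + 1) := by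
      exact Real.Gamma_add_one (by positivity)
    have g1 : Real.Gamma ((j : ℝ) + (α - β) + 1) ≠ 0 :=
      ne_of_gt (Real.Gamma_pos_of_pos (by linarith))
    have g2 : Real.Gamma ((j : ℝ) + β + 1) ≠ 0 :=
      ne_of_gt (Real.Gamma_pos_of_pos (by linarith))
    have g3 : Real.Gamma ((j : ℝ) + 1) ≠ 0 :=
      ne_of_gt (Real.Gamma_pos_of_pos (by linarith))
    have g4 : Real.Gamma ((j : ℝ) + α) ≠ 0 :=
      ne_of_gt (Real.Gamma_pos_of_pos hjα)
    have g5 : (2 * (j : ℝ) + α + 1) ≠ 0 := by positivity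
    simp only [normG2, Nat.cast_add, Nat.cast_one]
    have e1 : (j : ℝ) + 1 + (β - 1) + 1 = (j : ℝ) + β + 1 := by ring
    have e2 : (j : ℝ) + 1 + (α - β - 1) + 1 = (j : ℝ) + (α - β) + 1 := by ring
    have e3 : 2 * ((j : ℝ) + 1) + (β - 1) + (α - β - 1) + 1 = 2 * (j : ℝ) + α + 1 := by ring
    have e4 : (j : ℝ) + 1 + (β - 1) + (α - β - 1) + 1 = (j : ℝ) + α := by ring
    have e5 : (j : ℝ) + (α - β) + β + 1 = (j : ℝ) + α + 1 := by ring
    have e6 : 2 * (j : ℝ) + (α - β) + β + 1 = 2 * (j : ℝ) + α + 1 := by ring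
    rw [e1, e2, e3, e4, e5, e6, h1, h2]
    field_simp
  constructor
  · rw [div_le_div_iff₀ (by norm_num) hjα]
    linarith
  · rw [div_le_one hjα]
    linarith
end

section
/- Under Condition A, for every integer j ≥ 1 there exists a constant C > 0 such that for every natural number i: ( (i + 2j + α)² / λ_{i+j}² ) · ( |‖G_i^{(α−β+j, β+j)}‖|² / |‖G_{i+1}^{(β+j−1, α−β+j−1)}‖|² ) ≤ C, where λ_m := −c** · Γ(m+α+1)/Γ(m+1). -/
open Real

set_option maxHeartbeats 1000000 in
theorem stmt10 (α β css : ℝ)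
    (hα₁ : 1 < α) (hα₂ : α < 2) (hβ₁ : α - 1 ≤ β) (hβ₂ : β ≤ 1)
    (hcss : css = Real.sin (Real.pi * α) /
      (Real.sin (Real.pi * (α - β)) + Real.sin (Real.pi * β)))
    (lam : ℕ → ℝ)
    (hlam : ∀ m : ℕ, lam m = -css * (Real.Gamma ((m : ℝ) + α + 1) / Real.Gamma ((m : ℝ) + 1)))
    (j : ℕ) (hj : 1 ≤ j) :
    ∃ C : ℝ, 0 < C ∧ ∀ i : ℕ,
      (((i : ℝ) + 2 * (j : ℝ) + α) ^ 2 / (lam (i + j)) ^ 2)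
        * (normG2 (α - β + j) (β + j) i / normG2 (β + j - 1) (α - β + j - 1) (i + 1))
      ≤ C := by
  have hπ := Real.pi_pos
  -- sin (π α) < 0
  have hsα : Real.sin (Real.pi * α) < 0 := by
    have h1 : 0 < Real.sin (Real.pi * (α - 1)) :=
      Real.sin_pos_of_pos_of_lt_pi (by nlinarith) (by nlinarith)
    have h2 : Real.pi * α = Real.pi * (α - 1) + Real.pi := by ring
    rw [h2, Real.sin_add_pi]; linarith
  -- denominator positive
  have hβ0 : 0 < β := by linarith
  have hαβ0 : 0 < α - β := by linarith
  have hnn1 : 0 ≤ Real.sin (Real.pi * (α - β)) :=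
    Real.sin_nonneg_of_nonneg_of_le_pi (by positivity) (by nlinarith)
  have hnn2 : 0 ≤ Real.sin (Real.pi * β) :=
    Real.sin_nonneg_of_nonneg_of_le_pi (by positivity) (by nlinarith)
  have hden : 0 < Real.sin (Real.pi * (α - β)) + Real.sin (Real.pi * β) := by
    rcases lt_or_eq_of_le hβ₂ with h | h
    · have : 0 < Real.sin (Real.pi * β) :=
        Real.sin_pos_of_pos_of_lt_pi (by positivity) (by nlinarith)
      linarith
    · have : 0 < Real.sin (Real.pi * (α - β)) :=
        Real.sin_pos_of_pos_of_lt_pi (by nlinarith) (by nlinarith)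
      linarith
  have hcneg : css < 0 := by
    rw [hcss]; exact div_neg_of_neg_of_pos hsα hden
  have hc2 : 0 < css ^ 2 := by nlinarith
  refine ⟨2 / css ^ 2, by positivity, fun i => ?_⟩
  have hJ1 : (1 : ℝ) ≤ (j : ℝ) := by exact_mod_cast hj
  have hI0 : (0 : ℝ) ≤ (i : ℝ) := Nat.cast_nonneg i
  set I := (i : ℝ) with hIdef
  set J := (j : ℝ) with hJdef
  -- positivity of Gamma arguments
  have p1 : (0 : ℝ) < I + α - β + J + 1 := by linarith
  have p2 : (0 : ℝ) < I + β + J + 1 := by linarith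
  have p3 : (0 : ℝ) < I + 1 := by linarith
  have p4 : (0 : ℝ) < I + α + 2 * J := by linarith
  have g1 : 0 < Real.Gamma (I + α - β + J + 1) := Real.Gamma_pos_of_pos p1
  have g2 : 0 < Real.Gamma (I + β + J + 1) := Real.Gamma_pos_of_pos p2
  have g3 : 0 < Real.Gamma (I + 1) := Real.Gamma_pos_of_pos p3
  have g4 : 0 < Real.Gamma (I + α + 2 * J) := Real.Gamma_pos_of_pos p4
  have hd : (0 : ℝ) < 2 * I + α + 2 * J + 1 := by linarith
  -- closed forms of the two norms
  have hN1 : normG2 (α - β + J) (β + J) i =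
      Real.Gamma (I + α - β + J + 1) * Real.Gamma (I + β + J + 1) /
        ((2 * I + α + 2 * J + 1) * Real.Gamma (I + 1) *
          ((I + α + 2 * J) * Real.Gamma (I + α + 2 * J))) := by
    unfold normG2
    rw [show I + (α - β + J) + 1 = I + α - β + J + 1 by ring,
        show I + (β + J) + 1 = I + β + J + 1 by ring,
        show 2 * I + (α - β + J) + (β + J) + 1 = 2 * I + α + 2 * J + 1 by ring,
        show I + (α - β + J) + (β + J) + 1 = (I + α + 2 * J) + 1 by ring,
        Real.Gamma_add_one (ne_of_gt p4)]
  have hN2 : normG2 (β + J - 1) (α - β + J - 1) (i + 1) =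
      Real.Gamma (I + β + J + 1) * Real.Gamma (I + α - β + J + 1) /
        ((2 * I + α + 2 * J + 1) * ((I + 1) * Real.Gamma (I + 1)) *
          Real.Gamma (I + α + 2 * J)) := by
    unfold normG2
    push_cast
    rw [show I + 1 + (β + J - 1) + 1 = I + β + J + 1 by ring,
        show I + 1 + (α - β + J - 1) + 1 = I + α - β + J + 1 by ring,
        show 2 * (I + 1) + (β + J - 1) + (α - β + J - 1) + 1 = 2 * I + α + 2 * J + 1 by ring,
        show I + 1 + (β + J - 1) + (α - β + J - 1) + 1 = I + α + 2 * J by ring,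
        Real.Gamma_add_one (ne_of_gt p3)]
  have hratio : normG2 (α - β + J) (β + J) i / normG2 (β + J - 1) (α - β + J - 1) (i + 1)
      = (I + 1) / (I + α + 2 * J) := by
    rw [hN1, hN2]
    field_simp
  rw [hratio, hlam (i + j)]
  push_cast
  -- Gamma ratio lower bound
  have pm : (0 : ℝ) < I + J + 1 := by linarith
  have gm : 0 < Real.Gamma (I + J + 1) := Real.Gamma_pos_of_pos pm
  have hmono : Real.Gamma (I + J + 1 + 1) ≤ Real.Gamma (I + J + α + 1) := by
    apply (Real.Gamma_strictMonoOn_Ici.monotoneOn)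
    · exact Set.mem_Ici.2 (by linarith)
    · exact Set.mem_Ici.2 (by linarith)
    · linarith
  have hrec : Real.Gamma (I + J + 1 + 1) = (I + J + 1) * Real.Gamma (I + J + 1) :=
    Real.Gamma_add_one (ne_of_gt pm)
  have hR : I + J + 1 ≤ Real.Gamma (I + J + α + 1) / Real.Gamma (I + J + 1) := by
    rw [le_div_iff₀ gm]
    calc (I + J + 1) * Real.Gamma (I + J + 1) = Real.Gamma (I + J + 1 + 1) := hrec.symm
      _ ≤ Real.Gamma (I + J + α + 1) := hmono
  set R := Real.Gamma (I + J + α + 1) / Real.Gamma (I + J + 1) with hRdef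
  have hRpos : 0 < R := div_pos (Real.Gamma_pos_of_pos (by linarith)) gm
  have hlpos : 0 < (-css * R) ^ 2 := pow_pos (mul_pos (neg_pos.2 hcneg) hRpos) 2
  rw [div_mul_div_comm, div_le_div_iff₀ (mul_pos hlpos p4) hc2]
  have key : (I + α + 2 * J) * (I + 1) ≤ 2 * R ^ 2 := by
    have h1 : (I + α + 2 * J) * (I + 1) ≤ 2 * (I + J + 1) ^ 2 := by nlinarith
    have h2 : (I + J + 1) ^ 2 ≤ R ^ 2 := pow_le_pow_left₀ pm.le hR 2
    linarith
  have hstep : css ^ 2 * ((I + α + 2 * J) * (I + 1)) ≤ css ^ 2 * (2 * R ^ 2) :=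
    mul_le_mul_of_nonneg_left key hc2.le
  nlinarith [mul_le_mul_of_nonneg_right hstep p4.le]
end

section
/- Fix reals α, β with 1 < α < 2 and α−1 < β ≤ 1 (i.e. 0 ≤ r < 1). Let (f_i)_{i∈ℕ} be a real sequence with Σ_{i=0}^∞ f_i² / |‖G_i^{(β,α−β)}‖|² < ∞. Then the series Σ_{i=0}^∞ ( Γ(i+α)/Γ(i+1+α) ) · ( f_i / |‖G_i^{(β,α−β)}‖|² ) · ( Γ(i+1+α−β) / ( Γ(i+2) Γ(α−β) ) ) converges absolutely. (This series equals Σ_i μ_i c_i G_{i+1}^{(β−1,α−β−1)}(0) up to signs, and its convergence is what makes the flux boundary value at x = 0 well defined.) -/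
open Real

lemma gamma_add_le {x s : ℝ} (hx : 0 < x) (hs0 : 0 ≤ s) (hs1 : s ≤ 1) :
    Real.Gamma (x + s) ≤ Real.Gamma x * x ^ s := by
  rcases eq_or_lt_of_le hs0 with h0 | h0
  · simp [← h0]
  rcases eq_or_lt_of_le hs1 with h1 | h1
  · rw [h1, Real.Gamma_add_one hx.ne', Real.rpow_one, mul_comm]
  · have h := Real.Gamma_mul_add_mul_le_rpow_Gamma_mul_rpow_Gamma hx
      (by linarith : (0:ℝ) < x + 1) (by linarith : (0:ℝ) < 1 - s) h0 (by ring)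
    rw [show (1 - s) * x + s * (x + 1) = x + s by ring,
      Real.Gamma_add_one hx.ne',
      Real.mul_rpow hx.le (Real.Gamma_pos_of_pos hx).le] at h
    calc Real.Gamma (x + s) ≤ Real.Gamma x ^ (1 - s) * (x ^ s * Real.Gamma x ^ s) := h
      _ = Real.Gamma x * x ^ s := by
          rw [mul_comm (x ^ s), ← mul_assoc, ← Real.rpow_add (Real.Gamma_pos_of_pos hx)]
          norm_num

lemma stmt11_bound (α β : ℝ)
    (hα₁ : 1 < α) (hα₂ : α < 2) (hβ₁ : α - 1 < β) (hβ₂ : β ≤ 1) (i : ℕ) :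
    (Real.Gamma ((i : ℝ) + α) / Real.Gamma ((i : ℝ) + 1 + α)
      * (Real.Gamma ((i : ℝ) + 1 + α - β)
          / (Real.Gamma ((i : ℝ) + 2) * Real.Gamma (α - β)))) ^ 2 / normG2 β (α - β) i
    ≤ 6 / Real.Gamma (α - β) ^ 2 * ((i : ℝ) + 1) ^ (2 * α - 2 * β - 3) := by
  set x : ℝ := (i : ℝ) with hxdef
  have hx0 : (0:ℝ) ≤ x := Nat.cast_nonneg i
  have hu : (0:ℝ) < x + 1 := by linarith
  have hβ0 : (0:ℝ) < β := by linarith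
  have hxα : (0:ℝ) < x + α := by linarith
  have hP : 0 < Real.Gamma (x + α) := Real.Gamma_pos_of_pos (by linarith)
  have hQ : 0 < Real.Gamma (x + 1) := Real.Gamma_pos_of_pos hu
  have hR : 0 < Real.Gamma (x + 1 + α - β) := Real.Gamma_pos_of_pos (by linarith)
  have hS : 0 < Real.Gamma (x + β + 1) := Real.Gamma_pos_of_pos (by linarith)
  have hg : 0 < Real.Gamma (α - β) := Real.Gamma_pos_of_pos (by linarith)
  set P := Real.Gamma (x + α)
  set Q := Real.Gamma (x + 1)
  set R := Real.Gamma (x + 1 + α - β)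
  set S := Real.Gamma (x + β + 1)
  set g := Real.Gamma (α - β)
  set u : ℝ := x + 1 with hudef
  -- rewrites of the Gamma functional equation
  have hg1 : Real.Gamma (x + 1 + α) = (x + α) * P := by
    rw [show x + 1 + α = (x + α) + 1 by ring, Real.Gamma_add_one hxα.ne']
  have hg2 : Real.Gamma (x + β + (α - β) + 1) = (x + α) * P := by
    rw [show x + β + (α - β) + 1 = (x + α) + 1 by ring, Real.Gamma_add_one hxα.ne']
  have hg3 : Real.Gamma (x + 2) = u * Q := by
    rw [show x + 2 = (x + 1) + 1 by ring, Real.Gamma_add_one hu.ne']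
  have hNG : normG2 β (α - β) i = S * R / ((2 * x + α + 1) * Q * ((x + α) * P)) := by
    rw [normG2, ← hxdef, show x + (α - β) + 1 = x + 1 + α - β by ring, hg2,
      show 2 * x + β + (α - β) + 1 = 2 * x + α + 1 by ring]
  -- key bounds from log-convexity
  have hb1 : P ≤ Q * u ^ (α - 1) := by
    have := gamma_add_le hu (by linarith : (0:ℝ) ≤ α - 1) (by linarith : α - 1 ≤ 1)
    rwa [show u + (α - 1) = x + α by rw [hudef]; ring] at this
  have hb2 : R ≤ Q * u ^ (α - β) := by
    have := gamma_add_le hu (by linarith : (0:ℝ) ≤ α - β) (by linarith : α - β ≤ 1)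
    rwa [show u + (α - β) = x + 1 + α - β by rw [hudef]; ring] at this
  have huβ : (0:ℝ) < u + β := by linarith
  have hb3 : u * Q ≤ S * (u + β) ^ (1 - β) := by
    have := gamma_add_le huβ (by linarith : (0:ℝ) ≤ 1 - β) (by linarith : 1 - β ≤ 1)
    rwa [show u + β + (1 - β) = x + 2 by rw [hudef]; ring, hg3,
      show Real.Gamma (u + β) = S by rw [hudef, show x + 1 + β = x + β + 1 by ring]] at this
  have hb4 : (u + β) ^ (1 - β) ≤ 2 * u ^ (1 - β) := by
    calc (u + β) ^ (1 - β) ≤ (2 * u) ^ (1 - β) := by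
          apply Real.rpow_le_rpow huβ.le (by linarith) (by linarith)
      _ = (2:ℝ) ^ (1 - β) * u ^ (1 - β) := Real.mul_rpow (by norm_num) hu.le
      _ ≤ 2 * u ^ (1 - β) := by
          have h2 : (2:ℝ) ^ (1 - β) ≤ (2:ℝ) ^ (1:ℝ) :=
            Real.rpow_le_rpow_of_exponent_le (by norm_num) (by linarith)
          rw [Real.rpow_one] at h2
          exact mul_le_mul_of_nonneg_right h2 (Real.rpow_nonneg hu.le _)
  have hSlow : Q * u ^ β / 2 ≤ S := by
    have h5 : u * Q ≤ S * (2 * u ^ (1 - β)) :=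
      hb3.trans (mul_le_mul_of_nonneg_left hb4 hS.le)
    have h6 : u = u ^ β * u ^ (1 - β) := by
      rw [← Real.rpow_add hu]; norm_num
    have hup : (0:ℝ) < u ^ (1 - β) := Real.rpow_pos_of_pos hu _
    rw [div_le_iff₀ (by norm_num)]
    nlinarith [h5, h6, hup]
  have hN : 0 < normG2 β (α - β) i := by
    rw [hNG]; positivity
  have hux : (0:ℝ) < 2 * x + α + 1 := by linarith
  have E : (P / ((x + α) * P) * (R / (u * Q * g))) ^ 2
        / (S * R / ((2 * x + α + 1) * Q * ((x + α) * P)))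
      = R * (2 * x + α + 1) * P / ((x + α) * u ^ ((2:ℝ)) * Q * g ^ 2 * S) := by
    have hu2 : u ^ ((2:ℝ)) = u * u := by
      rw [show ((2:ℝ)) = ((2:ℕ):ℝ) by norm_num, Real.rpow_natCast]; ring
    rw [hu2]
    field_simp
  rw [hNG, hg1, hg3, E]
  have hu2pos : (0:ℝ) < u ^ ((2:ℝ)) := Real.rpow_pos_of_pos hu _
  have h2xα : 2 * x + α + 1 ≤ 3 * (x + α) := by linarith
  calc R * (2 * x + α + 1) * P / ((x + α) * u ^ ((2:ℝ)) * Q * g ^ 2 * S)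
      ≤ R * (2 * x + α + 1) * P / ((x + α) * u ^ ((2:ℝ)) * Q * g ^ 2 * (Q * u ^ β / 2)) := by
        gcongr
    _ ≤ (Q * u ^ (α - β)) * (3 * (x + α)) * (Q * u ^ (α - 1))
        / ((x + α) * u ^ ((2:ℝ)) * Q * g ^ 2 * (Q * u ^ β / 2)) := by
        gcongr
    _ = 6 / g ^ 2 * u ^ (2 * α - 2 * β - 3) := by
        have hrp : u ^ (α - β) * u ^ (α - 1)
            = u ^ (2 * α - 2 * β - 3) * (u ^ ((2:ℝ)) * u ^ β) := by
          rw [← Real.rpow_add hu, ← Real.rpow_add hu, ← Real.rpow_add hu]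
          congr 1
          ring
        rw [show 6 / g ^ 2 * u ^ (2 * α - 2 * β - 3)
            = 6 * u ^ (2 * α - 2 * β - 3) / g ^ 2 by ring,
          div_eq_div_iff (by positivity) (by positivity)]
        linear_combination (3 * (x + α) * Q ^ 2 * g ^ 2) * hrp

theorem stmt11 (α β : ℝ)
    (hα₁ : 1 < α) (hα₂ : α < 2) (hβ₁ : α - 1 < β) (hβ₂ : β ≤ 1)
    (f : ℕ → ℝ)
    (hf : Summable fun i : ℕ => (f i) ^ 2 / normG2 β (α - β) i) :
    Summable fun i : ℕ =>
      |(Real.Gamma ((i : ℝ) + α) / Real.Gamma ((i : ℝ) + 1 + α))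
        * (f i / normG2 β (α - β) i)
        * (Real.Gamma ((i : ℝ) + 1 + α - β)
            / (Real.Gamma ((i : ℝ) + 2) * Real.Gamma (α - β)))| := by
  have hg : 0 < Real.Gamma (α - β) := Real.Gamma_pos_of_pos (by linarith)
  set p : ℝ := 2 * α - 2 * β - 3 with hp
  have hplt : p < -1 := by rw [hp]; linarith
  -- summable majorant
  have hsum1 : Summable (fun i : ℕ => ((i : ℝ) + 1) ^ p) := by
    have h1 : Summable (fun n : ℕ => (n : ℝ) ^ p) := Real.summable_nat_rpow.mpr hplt
    have h2 := (summable_nat_add_iff 1).mpr h1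
    refine h2.congr fun n => ?_
    push_cast
    ring_nf
  have hB : Summable (fun i : ℕ => 6 / Real.Gamma (α - β) ^ 2 * ((i : ℝ) + 1) ^ p) :=
    hsum1.mul_left _
  refine Summable.of_nonneg_of_le (fun i => abs_nonneg _)
    (fun i => ?_) (((hf.div_const 2).add (hB.div_const 2)))
  set x : ℝ := (i : ℝ) with hxdef
  have hx0 : (0:ℝ) ≤ x := Nat.cast_nonneg i
  have hP : 0 < Real.Gamma (x + α) := Real.Gamma_pos_of_pos (by linarith)
  have hG1 : 0 < Real.Gamma (x + 1 + α) := Real.Gamma_pos_of_pos (by linarith)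
  have hR : 0 < Real.Gamma (x + 1 + α - β) := Real.Gamma_pos_of_pos (by linarith)
  have hG2 : 0 < Real.Gamma (x + 2) := Real.Gamma_pos_of_pos (by linarith)
  have hN : 0 < normG2 β (α - β) i := by
    rw [normG2]
    have h1 : 0 < Real.Gamma (x + β + 1) := Real.Gamma_pos_of_pos (by linarith)
    have h2 : 0 < Real.Gamma (x + (α - β) + 1) := Real.Gamma_pos_of_pos (by linarith)
    have h3 : 0 < Real.Gamma (x + β + (α - β) + 1) := Real.Gamma_pos_of_pos (by linarith)
    have h4 : (0:ℝ) < 2 * x + β + (α - β) + 1 := by linarith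
    have h5 : 0 < Real.Gamma (x + 1) := Real.Gamma_pos_of_pos (by linarith)
    positivity
  set A : ℝ := Real.Gamma (x + α) / Real.Gamma (x + 1 + α)
    * (Real.Gamma (x + 1 + α - β) / (Real.Gamma (x + 2) * Real.Gamma (α - β))) with hA
  have hA0 : 0 ≤ A := by rw [hA]; positivity
  have habs : |Real.Gamma (x + α) / Real.Gamma (x + 1 + α)
        * (f i / normG2 β (α - β) i)
        * (Real.Gamma (x + 1 + α - β) / (Real.Gamma (x + 2) * Real.Gamma (α - β)))|
      = A * |f i| / normG2 β (α - β) i := by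
    rw [abs_mul, abs_mul,
      abs_of_nonneg (by positivity : (0:ℝ) ≤ Real.Gamma (x + α) / Real.Gamma (x + 1 + α)),
      abs_of_nonneg (by positivity : (0:ℝ) ≤ Real.Gamma (x + 1 + α - β) / (Real.Gamma (x + 2) * Real.Gamma (α - β))),
      abs_div, abs_of_pos hN, hA]
    ring
  rw [habs]
  have hCS : A * |f i| ≤ (f i ^ 2 + A ^ 2) / 2 := by
    nlinarith [sq_nonneg (A - |f i|), sq_abs (f i)]
  calc A * |f i| / normG2 β (α - β) i
      ≤ ((f i ^ 2 + A ^ 2) / 2) / normG2 β (α - β) i := by gcongr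
    _ = f i ^ 2 / normG2 β (α - β) i / 2 + (A ^ 2 / normG2 β (α - β) i) / 2 := by ring
    _ ≤ f i ^ 2 / normG2 β (α - β) i / 2
        + (6 / Real.Gamma (α - β) ^ 2 * ((i : ℝ) + 1) ^ p) / 2 := by
        gcongr
        exact stmt11_bound α β hα₁ hα₂ hβ₁ hβ₂ i
end

section
/- Under Condition A, let (f_i)_{i∈ℕ} be a real sequence with Σ_{i=0}^∞ f_i² / |‖G_i^{(β,α−β)}‖|² < ∞, and set λ_i := −c** · Γ(i+1+α)/Γ(i+1) and c_i := f_i / ( λ_i · |‖G_i^{(β,α−β)}‖|² ). Then Σ_{i=0}^∞ c_i² · |‖G_i^{(α−β,β)}‖|² < ∞. (These are the coefficients of the spectral solution u = ρ^{(α−β,β)} Σ_i c_i G_i^{(α−β,β)} of the fractional diffusion equation with homogeneous Dirichlet conditions, and this summability expresses u ∈ L²_{ρ^{(−(α−β),−β)}}(0,1).) -/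
open Real

set_option maxHeartbeats 1000000 in
theorem stmt12 (α β css : ℝ)
    (hα₁ : 1 < α) (hα₂ : α < 2) (hβ₁ : α - 1 ≤ β) (hβ₂ : β ≤ 1)
    (hcss : css = Real.sin (Real.pi * α) /
      (Real.sin (Real.pi * (α - β)) + Real.sin (Real.pi * β)))
    (f lam c : ℕ → ℝ)
    (hlam : ∀ i : ℕ, lam i = -css * (Real.Gamma ((i : ℝ) + 1 + α) / Real.Gamma ((i : ℝ) + 1)))
    (hc : ∀ i : ℕ, c i = f i / (lam i * normG2 β (α - β) i))
    (hf : Summable fun i : ℕ => (f i) ^ 2 / normG2 β (α - β) i) :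
    Summable fun i : ℕ => (c i) ^ 2 * normG2 (α - β) β i := by
  have hβpos : 0 < β := by linarith
  have hαβpos : 0 < α - β := by linarith
  -- positivity of the norms
  have hN : ∀ i : ℕ, 0 < normG2 β (α - β) i := by
    intro i
    unfold normG2
    have h1 : (0:ℝ) < Real.Gamma ((i : ℝ) + β + 1) :=
      Real.Gamma_pos_of_pos (by positivity)
    have h2 : (0:ℝ) < Real.Gamma ((i : ℝ) + (α - β) + 1) :=
      Real.Gamma_pos_of_pos (by positivity)
    have h3 : (0:ℝ) < Real.Gamma ((i : ℝ) + 1) :=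
      Real.Gamma_pos_of_pos (by positivity)
    have h4 : (0:ℝ) < Real.Gamma ((i : ℝ) + β + (α - β) + 1) :=
      Real.Gamma_pos_of_pos (by positivity)
    have h5 : (0:ℝ) < 2 * (i : ℝ) + β + (α - β) + 1 := by positivity
    positivity
  -- symmetry of the norm
  have hsym : ∀ i : ℕ, normG2 (α - β) β i = normG2 β (α - β) i := by
    intro i
    unfold normG2
    ring_nf
  -- css < 0
  have hsin1 : Real.sin (Real.pi * α) < 0 := by
    have : Real.pi * α = Real.pi * (α - 1) + Real.pi := by ring
    rw [this, Real.sin_add_pi]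
    have : 0 < Real.sin (Real.pi * (α - 1)) :=
      Real.sin_pos_of_pos_of_lt_pi (mul_pos Real.pi_pos (by linarith))
        (by nlinarith [Real.pi_pos])
    linarith
  have hden : 0 < Real.sin (Real.pi * (α - β)) + Real.sin (Real.pi * β) := by
    have h1 : 0 ≤ Real.sin (Real.pi * (α - β)) := by
      apply Real.sin_nonneg_of_nonneg_of_le_pi (by positivity)
      nlinarith [Real.pi_pos]
    have h2 : 0 ≤ Real.sin (Real.pi * β) := by
      apply Real.sin_nonneg_of_nonneg_of_le_pi (by positivity)
      nlinarith [Real.pi_pos]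
    rcases lt_or_eq_of_le hβ₂ with hb | hb
    · have : 0 < Real.sin (Real.pi * β) :=
        Real.sin_pos_of_pos_of_lt_pi (mul_pos Real.pi_pos hβpos)
          (by nlinarith [Real.pi_pos])
      linarith
    · have hab : α - β < 1 := by rw [hb]; linarith
      have : 0 < Real.sin (Real.pi * (α - β)) :=
        Real.sin_pos_of_pos_of_lt_pi (mul_pos Real.pi_pos hαβpos)
          (by nlinarith [Real.pi_pos])
      linarith
  have hcss_neg : css < 0 := by
    rw [hcss]; exact div_neg_of_neg_of_pos hsin1 hden
  have hcss2 : 0 < css ^ 2 := by nlinarith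
  -- the Gamma ratio is at least 1
  have hr : ∀ i : ℕ, 1 ≤ Real.Gamma ((i : ℝ) + 1 + α) / Real.Gamma ((i : ℝ) + 1) := by
    intro i
    have h3 : (0:ℝ) < Real.Gamma ((i : ℝ) + 1) := Real.Gamma_pos_of_pos (by positivity)
    rw [le_div_iff₀ h3, one_mul]
    have hstep : Real.Gamma ((i : ℝ) + 1 + 1) = ((i : ℝ) + 1) * Real.Gamma ((i : ℝ) + 1) := by
      exact Real.Gamma_add_one (by positivity)
    have h1 : Real.Gamma ((i : ℝ) + 1) ≤ Real.Gamma ((i : ℝ) + 1 + 1) := by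
      rw [hstep]
      nlinarith [h3, Nat.cast_nonneg (α := ℝ) i]
    have h2 : Real.Gamma ((i : ℝ) + 1 + 1) ≤ Real.Gamma ((i : ℝ) + 1 + α) := by
      apply le_of_lt
      apply Real.Gamma_strictMonoOn_Ici
      · simp only [Set.mem_Ici]
        have := Nat.cast_nonneg (α := ℝ) i; linarith
      · simp only [Set.mem_Ici]
        have := Nat.cast_nonneg (α := ℝ) i; linarith
      · linarith
    linarith
  -- lam i ≠ 0 and css ^ 2 ≤ lam i ^ 2
  have hlam2 : ∀ i : ℕ, css ^ 2 ≤ (lam i) ^ 2 := by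
    intro i
    rw [hlam i]
    have h := hr i
    set r := Real.Gamma ((i : ℝ) + 1 + α) / Real.Gamma ((i : ℝ) + 1) with hrdef
    have h1 : 1 ≤ r ^ 2 := by nlinarith
    calc css ^ 2 = css ^ 2 * 1 := by ring
      _ ≤ css ^ 2 * r ^ 2 := by nlinarith [sq_nonneg css]
      _ = (-css * r) ^ 2 := by ring
  have hlamne : ∀ i : ℕ, lam i ≠ 0 := by
    intro i h
    have := hlam2 i
    rw [h] at this
    nlinarith
  -- comparison
  apply Summable.of_nonneg_of_le
    (f := fun i : ℕ => (css ^ 2)⁻¹ * ((f i) ^ 2 / normG2 β (α - β) i))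
  · intro i
    have := hN i
    rw [hsym i]
    positivity
  · intro i
    rw [hsym i, hc i]
    have hNi := hN i
    have hlami := hlamne i
    have hl2 : (0:ℝ) < (lam i) ^ 2 := by positivity
    have key : (f i / (lam i * normG2 β (α - β) i)) ^ 2 * normG2 β (α - β) i
        = f i ^ 2 / ((lam i) ^ 2 * normG2 β (α - β) i) := by
      field_simp
    have key2 : (css ^ 2)⁻¹ * (f i ^ 2 / normG2 β (α - β) i)
        = f i ^ 2 / (css ^ 2 * normG2 β (α - β) i) := by
      field_simp
    rw [key, key2]
    apply div_le_div_of_nonneg_left (sq_nonneg (f i)) (by positivity)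
    exact mul_le_mul_of_nonneg_right (hlam2 i) hNi.le
  · exact hf.mul_left _
end

section
/- Under Condition A, let (f_i)_{i∈ℕ} be a real sequence with Σ_{i=0}^∞ f_i² / |‖G_i^{(β,α−β)}‖|² < ∞, and set λ_i := −c** · Γ(i+1+α)/Γ(i+1) and c_i := f_i / ( λ_i · |‖G_i^{(β,α−β)}‖|² ). Then Σ_{i=1}^∞ i² · c_{i−1}² · |‖G_i^{(α−β−1,β−1)}‖|² < ∞. (This summability expresses that the derivative Du of the spectral solution u = ρ^{(α−β,β)} Σ_i c_i G_i^{(α−β,β)} belongs to L²_{ρ^{(−(α−β)+1,−β+1)}}(0,1).) -/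
open Real

set_option maxHeartbeats 1600000 in
theorem stmt13 (α β css : ℝ)
    (hα₁ : 1 < α) (hα₂ : α < 2) (hβ₁ : α - 1 ≤ β) (hβ₂ : β ≤ 1)
    (hcss : css = Real.sin (Real.pi * α) /
      (Real.sin (Real.pi * (α - β)) + Real.sin (Real.pi * β)))
    (f lam c : ℕ → ℝ)
    (hlam : ∀ i : ℕ, lam i = -css * (Real.Gamma ((i : ℝ) + 1 + α) / Real.Gamma ((i : ℝ) + 1)))
    (hc : ∀ i : ℕ, c i = f i / (lam i * normG2 β (α - β) i))
    (hf : Summable fun i : ℕ => (f i) ^ 2 / normG2 β (α - β) i) :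
    Summable fun i : ℕ =>
      ((i : ℝ) + 1) ^ 2 * (c i) ^ 2 * normG2 (α - β - 1) (β - 1) (i + 1) := by
  have hπ := Real.pi_pos
  have hβpos : 0 < β := by linarith
  have hab : 0 < α - β := by linarith
  -- css < 0
  have hnum : Real.sin (Real.pi * α) < 0 := by
    have h1 : 0 < Real.sin (Real.pi * (α - 1)) :=
      Real.sin_pos_of_pos_of_lt_pi (by nlinarith) (by nlinarith)
    have : Real.pi * α = Real.pi * (α - 1) + Real.pi := by ring
    rw [this, Real.sin_add_pi]
    linarith
  have hden : 0 < Real.sin (Real.pi * (α - β)) + Real.sin (Real.pi * β) := by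
    have h1 : 0 ≤ Real.sin (Real.pi * (α - β)) :=
      Real.sin_nonneg_of_nonneg_of_le_pi (by positivity) (by nlinarith)
    have h2 : 0 ≤ Real.sin (Real.pi * β) :=
      Real.sin_nonneg_of_nonneg_of_le_pi (by positivity) (by nlinarith)
    rcases lt_or_ge β 1 with hb | hb
    · have : 0 < Real.sin (Real.pi * β) :=
        Real.sin_pos_of_pos_of_lt_pi (by positivity) (by nlinarith)
      linarith
    · have hb1 : β = 1 := le_antisymm hβ₂ hb
      have : 0 < Real.sin (Real.pi * (α - β)) := by
        apply Real.sin_pos_of_pos_of_lt_pi (by positivity)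
        rw [hb1]; nlinarith
      linarith
  have hcssneg : css < 0 := by rw [hcss]; exact div_neg_of_neg_of_pos hnum hden
  have hcssne : css ≠ 0 := ne_of_lt hcssneg
  have hcss2 : (0 : ℝ) < css ^ 2 := by positivity
  -- per-index bound
  refine Summable.of_nonneg_of_le ?_ ?_
    (hf.mul_left (2 / css ^ 2) :
      Summable fun i : ℕ => (2 / css ^ 2) * ((f i) ^ 2 / normG2 β (α - β) i))
  · intro i
    set x : ℝ := (i : ℝ) with hx
    have hx0 : 0 ≤ x := Nat.cast_nonneg i
    have hM : 0 < normG2 (α - β - 1) (β - 1) (i + 1) := by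
      unfold normG2
      push_cast
      have g1 := Real.Gamma_pos_of_pos (show (0:ℝ) < x + 1 + (α - β - 1) + 1 by linarith)
      have g2 := Real.Gamma_pos_of_pos (show (0:ℝ) < x + 1 + (β - 1) + 1 by linarith)
      have g3 := Real.Gamma_pos_of_pos (show (0:ℝ) < x + 1 + 1 by linarith)
      have g4 := Real.Gamma_pos_of_pos
        (show (0:ℝ) < x + 1 + (α - β - 1) + (β - 1) + 1 by linarith)
      have h5 : (0:ℝ) < 2 * (x + 1) + (α - β - 1) + (β - 1) + 1 := by linarith
      positivity
    positivity
  · intro i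
    set x : ℝ := (i : ℝ) with hx
    have hx0 : 0 ≤ x := Nat.cast_nonneg i
    -- abbreviations for Gamma values
    set G1 : ℝ := Real.Gamma (x + 1) with hG1d
    set Gα : ℝ := Real.Gamma (x + α) with hGαd
    set Gb : ℝ := Real.Gamma (x + β + 1) with hGbd
    set Gab : ℝ := Real.Gamma (x + (α - β) + 1) with hGabd
    have hG1 : 0 < G1 := Real.Gamma_pos_of_pos (by linarith)
    have hGα : 0 < Gα := Real.Gamma_pos_of_pos (by linarith)
    have hGb : 0 < Gb := Real.Gamma_pos_of_pos (by linarith)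
    have hGab : 0 < Gab := Real.Gamma_pos_of_pos (by linarith)
    have hw : (0:ℝ) < 2 * x + α + 1 := by linarith
    -- recursion identities
    have e1 : Real.Gamma (x + 1 + α) = (x + α) * Gα := by
      rw [show x + 1 + α = (x + α) + 1 by ring, Real.Gamma_add_one (by positivity : x + α ≠ 0)]
    have e2 : Real.Gamma (x + β + (α - β) + 1) = (x + α) * Gα := by
      rw [show x + β + (α - β) + 1 = (x + α) + 1 by ring,
        Real.Gamma_add_one (by positivity : x + α ≠ 0)]
    -- explicit formulas
    have hN : normG2 β (α - β) i = Gb * Gab / ((2 * x + α + 1) * G1 * ((x + α) * Gα)) := by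
      unfold normG2
      rw [← hx, e2, ← hGbd]
      rw [show x + (α - β) + 1 = x + (α - β) + 1 by ring, ← hGabd, ← hG1d]
      ring_nf
    have hM : normG2 (α - β - 1) (β - 1) (i + 1)
        = Gab * Gb / ((2 * x + α + 1) * ((x + 1) * G1) * Gα) := by
      unfold normG2
      push_cast
      rw [show x + 1 + (α - β - 1) + 1 = x + (α - β) + 1 by ring, ← hGabd]
      rw [show x + 1 + (β - 1) + 1 = x + β + 1 by ring, ← hGbd]
      rw [show x + 1 + 1 = (x + 1) + 1 by ring,
        Real.Gamma_add_one (by positivity : x + 1 ≠ 0), ← hG1d]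
      rw [show x + 1 + (α - β - 1) + (β - 1) + 1 = x + α by ring, ← hGαd]
      rw [← hx]
      ring_nf
    have hNpos : 0 < normG2 β (α - β) i := by rw [hN]; positivity
    -- the key Gamma inequality : (x+1)*G1 ≤ (x+α)*Gα
    have hkey : (x + 1) * G1 ≤ (x + α) * Gα := by
      have h1 : Real.Gamma (x + 2) ≤ Real.Gamma (x + 1 + α) := by
        apply (Real.Gamma_strictMonoOn_Ici.monotoneOn)
          (by simp only [Set.mem_Ici]; linarith)
          (by simp only [Set.mem_Ici]; linarith) (by linarith)
      rwa [show x + 2 = (x + 1) + 1 by ring,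
        Real.Gamma_add_one (by positivity : x + 1 ≠ 0), ← hG1d, e1] at h1
    have hkey2 : (x + 1) * G1 ^ 2 ≤ 2 * ((x + α) * Gα ^ 2) := by
      have hsq : ((x + 1) * G1) ^ 2 ≤ ((x + α) * Gα) ^ 2 := by
        apply pow_le_pow_left₀ (by positivity) hkey
      nlinarith [mul_nonneg (show (0:ℝ) ≤ x + α by linarith)
        (show (0:ℝ) ≤ x + 2 - α by linarith), sq_nonneg Gα, hGα, hG1]
    -- rewrite the term
    rw [hc i, hlam i, ← hx, e1, ← hG1d, hM, hN]
    have hfactor : (x + 1) ^ 2 *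
          (f i / (-css * ((x + α) * Gα / G1) *
            (Gb * Gab / ((2 * x + α + 1) * G1 * ((x + α) * Gα))))) ^ 2 *
          (Gab * Gb / ((2 * x + α + 1) * ((x + 1) * G1) * Gα))
        = (f i) ^ 2 / (Gb * Gab / ((2 * x + α + 1) * G1 * ((x + α) * Gα))) *
          ((x + 1) * G1 ^ 2 / (css ^ 2 * ((x + α) * Gα ^ 2))) := by
      field_simp
    rw [hfactor]
    have hfac_le : (x + 1) * G1 ^ 2 / (css ^ 2 * ((x + α) * Gα ^ 2)) ≤ 2 / css ^ 2 := by
      rw [div_le_div_iff₀ (by positivity) hcss2]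
      calc (x + 1) * G1 ^ 2 * css ^ 2 ≤ 2 * ((x + α) * Gα ^ 2) * css ^ 2 := by
            apply mul_le_mul_of_nonneg_right hkey2 (le_of_lt hcss2)
        _ = 2 * (css ^ 2 * ((x + α) * Gα ^ 2)) := by ring
    have hbase : 0 ≤ (f i) ^ 2 / (Gb * Gab / ((2 * x + α + 1) * G1 * ((x + α) * Gα))) := by
      positivity
    calc (f i) ^ 2 / (Gb * Gab / ((2 * x + α + 1) * G1 * ((x + α) * Gα))) *
          ((x + 1) * G1 ^ 2 / (css ^ 2 * ((x + α) * Gα ^ 2)))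
        ≤ (f i) ^ 2 / (Gb * Gab / ((2 * x + α + 1) * G1 * ((x + α) * Gα))) * (2 / css ^ 2) := by
          exact mul_le_mul_of_nonneg_left hfac_le hbase
      _ = 2 / css ^ 2 * ((f i) ^ 2 / (Gb * Gab / ((2 * x + α + 1) * G1 * ((x + α) * Gα)))) := by
          ring
end

section
/- Under Condition A, fix an integer j ≥ 1. Let (f_i)_{i∈ℕ} be a real sequence, and set λ_i := −c** · Γ(i+1+α)/Γ(i+1) and c_i := f_i / ( λ_i · |‖G_i^{(β,α−β)}‖|² ). If Σ_{i=0}^∞ f_{i+j}² · ( Γ(i+2j+α)/Γ(i+j+α+1) )² · |‖G_{i+1}^{(β+j−1, α−β+j−1)}‖|² / ( |‖G_{i+j}^{(β,α−β)}‖|² )² < ∞, then Σ_{i=0}^∞ c_{i+j}² · ( Γ(i+2j+α+1)/Γ(i+j+α+1) )² · |‖G_i^{(α−β+j, β+j)}‖|² < ∞. (This is the coefficient form of the shift theorem: if D^{j−1}f ∈ L²_{ρ^{(β+j−1, α−β+j−1)}}(0,1), then D^j( u/ρ^{(α−β,β)} ) ∈ L²_{ρ^{(α−β+j, β+j)}}(0,1)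 for the spectral solution u = ρ^{(α−β,β)} Σ_i c_i G_i^{(α−β,β)}.) -/
open Real

lemma normG2_aux_pos {a b : ℝ} (ha : -1 < a) (hb : -1 < b) (hab : -1 < a + b) (k : ℕ) :
    0 < Real.Gamma ((k : ℝ) + a + 1) * Real.Gamma ((k : ℝ) + b + 1) /
      ((2 * (k : ℝ) + a + b + 1) * Real.Gamma ((k : ℝ) + 1) *
        Real.Gamma ((k : ℝ) + a + b + 1)) := by
  have hk : (0:ℝ) ≤ k := Nat.cast_nonneg k
  have h1 : 0 < Real.Gamma ((k : ℝ) + a + 1) := Real.Gamma_pos_of_pos (by linarith)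
  have h2 : 0 < Real.Gamma ((k : ℝ) + b + 1) := Real.Gamma_pos_of_pos (by linarith)
  have h3 : 0 < Real.Gamma ((k : ℝ) + 1) := Real.Gamma_pos_of_pos (by linarith)
  have h4 : 0 < Real.Gamma ((k : ℝ) + a + b + 1) := Real.Gamma_pos_of_pos (by linarith)
  have h5 : (0:ℝ) < 2 * (k:ℝ) + a + b + 1 := by linarith
  positivity

lemma normG2_pos {a b : ℝ} (ha : -1 < a) (hb : -1 < b) (hab : -1 < a + b) (k : ℕ) :
    0 < normG2 a b k := normG2_aux_pos ha hb hab k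

set_option maxHeartbeats 2000000 in
theorem stmt14 (α β css : ℝ)
    (hα₁ : 1 < α) (hα₂ : α < 2) (hβ₁ : α - 1 ≤ β) (hβ₂ : β ≤ 1)
    (hcss : css = Real.sin (Real.pi * α) /
      (Real.sin (Real.pi * (α - β)) + Real.sin (Real.pi * β)))
    (j : ℕ) (hj : 1 ≤ j)
    (f lam c : ℕ → ℝ)
    (hlam : ∀ i : ℕ, lam i = -css * (Real.Gamma ((i : ℝ) + 1 + α) / Real.Gamma ((i : ℝ) + 1)))
    (hc : ∀ i : ℕ, c i = f i / (lam i * normG2 β (α - β) i))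
    (hf : Summable fun i : ℕ =>
      (f (i + j)) ^ 2 * (Real.Gamma ((i : ℝ) + 2 * (j : ℝ) + α)
          / Real.Gamma ((i : ℝ) + (j : ℝ) + α + 1)) ^ 2
        * normG2 (β + j - 1) (α - β + j - 1) (i + 1)
        / (normG2 β (α - β) (i + j)) ^ 2) :
    Summable fun i : ℕ =>
      (c (i + j)) ^ 2 * (Real.Gamma ((i : ℝ) + 2 * (j : ℝ) + α + 1)
          / Real.Gamma ((i : ℝ) + (j : ℝ) + α + 1)) ^ 2
        * normG2 (α - β + j) (β + j) i := by
  -- css is negative, in particular nonzero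
  have hsin : Real.sin (Real.pi * α) < 0 := by
    have h1 : Real.sin (Real.pi * (α - 1)) > 0 :=
      Real.sin_pos_of_pos_of_lt_pi (by nlinarith [Real.pi_pos]) (by nlinarith [Real.pi_pos])
    have h2 : Real.pi * α = Real.pi * (α - 1) + Real.pi := by ring
    rw [h2, Real.sin_add_pi]
    linarith
  have hden : 0 < Real.sin (Real.pi * (α - β)) + Real.sin (Real.pi * β) := by
    rcases lt_or_eq_of_le hβ₂ with h | h
    · have h1 : 0 < Real.sin (Real.pi * β) :=
        Real.sin_pos_of_pos_of_lt_pi (by nlinarith [Real.pi_pos]) (by nlinarith [Real.pi_pos])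
      have h2 : 0 ≤ Real.sin (Real.pi * (α - β)) :=
        Real.sin_nonneg_of_nonneg_of_le_pi (by nlinarith [Real.pi_pos]) (by nlinarith [Real.pi_pos])
      linarith
    · subst h
      have h1 : 0 < Real.sin (Real.pi * (α - 1)) :=
        Real.sin_pos_of_pos_of_lt_pi (by nlinarith [Real.pi_pos]) (by nlinarith [Real.pi_pos])
      simpa [Real.sin_pi] using h1
  have hcssneg : css < 0 := by rw [hcss]; exact div_neg_of_neg_of_pos hsin hden
  have hcssne : css ≠ 0 := ne_of_lt hcssneg
  have hy : (1:ℝ) ≤ (j:ℝ) := by exact_mod_cast hj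
  have hβ0 : 0 < β := by linarith
  have hαβ0 : 0 < α - β := by linarith
  -- comparison with constant multiple of the hypothesis series
  refine Summable.of_nonneg_of_le ?_ ?_ (hf.mul_left ((2 * (j:ℝ) + α) / css ^ 2))
  · intro i
    have hN1 : 0 < normG2 (α - β + j) (β + j) i :=
      normG2_pos (by push_cast; linarith) (by push_cast; linarith) (by push_cast; linarith) i
    exact mul_nonneg (mul_nonneg (sq_nonneg _) (sq_nonneg _)) hN1.le
  · intro i
    have hx : (0:ℝ) ≤ (i:ℝ) := Nat.cast_nonneg i
    -- exact identity: LHS = q * (hypothesis term)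
    have key :
        (c (i + j)) ^ 2 * (Real.Gamma ((i : ℝ) + 2 * (j : ℝ) + α + 1)
            / Real.Gamma ((i : ℝ) + (j : ℝ) + α + 1)) ^ 2
          * normG2 (α - β + j) (β + j) i
        = (((i:ℝ) + 2*(j:ℝ) + α) * ((i:ℝ)+1) * Real.Gamma ((i:ℝ)+(j:ℝ)+1)^2
            / (css^2 * Real.Gamma ((i:ℝ)+(j:ℝ)+α+1)^2))
          * ((f (i + j)) ^ 2 * (Real.Gamma ((i : ℝ) + 2 * (j : ℝ) + α)
            / Real.Gamma ((i : ℝ) + (j : ℝ) + α + 1)) ^ 2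
          * normG2 (β + j - 1) (α - β + j - 1) (i + 1)
          / (normG2 β (α - β) (i + j)) ^ 2) := by
      simp only [hc, hlam, normG2]
      push_cast
      rw [show ((i:ℝ) + (j:ℝ) + 1 + α) = (i:ℝ) + (j:ℝ) + α + 1 from by ring,
          show ((i:ℝ) + (j:ℝ) + β + (α-β) + 1) = (i:ℝ) + (j:ℝ) + α + 1 from by ring,
          show ((i:ℝ) + (α - β + (j:ℝ)) + 1) = (i:ℝ) + (j:ℝ) + (α-β) + 1 from by ring,
          show ((i:ℝ) + (β + (j:ℝ)) + 1) = (i:ℝ) + (j:ℝ) + β + 1 from by ring,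
          show ((i:ℝ) + (α - β + (j:ℝ)) + (β + (j:ℝ)) + 1) = (i:ℝ) + 2*(j:ℝ) + α + 1 from by ring,
          show ((i:ℝ) + 1 + (β + (j:ℝ) - 1) + 1) = (i:ℝ) + (j:ℝ) + β + 1 from by ring,
          show ((i:ℝ) + 1 + (α - β + (j:ℝ) - 1) + 1) = (i:ℝ) + (j:ℝ) + (α-β) + 1 from by ring,
          show ((i:ℝ) + 1 + (β + (j:ℝ) - 1) + (α - β + (j:ℝ) - 1) + 1) = (i:ℝ) + 2*(j:ℝ) + α from by ring]
      have hs1 : ((i:ℝ) + 2*(j:ℝ) + α) ≠ 0 := by positivity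
      have hs2 : ((i:ℝ) + 1) ≠ 0 := by positivity
      rw [Real.Gamma_add_one hs1, Real.Gamma_add_one hs2]
      have hg1 : Real.Gamma ((i:ℝ) + (j:ℝ) + α + 1) ≠ 0 :=
        (Real.Gamma_pos_of_pos (by linarith)).ne'
      have hg2 : Real.Gamma ((i:ℝ) + (j:ℝ) + 1) ≠ 0 :=
        (Real.Gamma_pos_of_pos (by linarith)).ne'
      have hg3 : Real.Gamma ((i:ℝ) + (j:ℝ) + β + 1) ≠ 0 :=
        (Real.Gamma_pos_of_pos (by linarith)).ne'
      have hg4 : Real.Gamma ((i:ℝ) + (j:ℝ) + (α-β) + 1) ≠ 0 :=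
        (Real.Gamma_pos_of_pos (by linarith)).ne'
      have hg5 : Real.Gamma ((i:ℝ) + 1) ≠ 0 :=
        (Real.Gamma_pos_of_pos (by linarith)).ne'
      have hg6 : Real.Gamma ((i:ℝ) + 2*(j:ℝ) + α) ≠ 0 :=
        (Real.Gamma_pos_of_pos (by linarith)).ne'
      have hz1 : (2 * ((i:ℝ) + (j:ℝ)) + β + (α - β) + 1) ≠ 0 := by positivity
      have hz2 : (2 * (i:ℝ) + (α - β + (j:ℝ)) + (β + (j:ℝ)) + 1) ≠ 0 := by
        have : (0:ℝ) < 2 * (i:ℝ) + (α - β + (j:ℝ)) + (β + (j:ℝ)) + 1 := by linarith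
        exact this.ne'
      have hz3 : (2 * ((i:ℝ) + 1) + (β + (j:ℝ) - 1) + (α - β + (j:ℝ) - 1) + 1) ≠ 0 := by
        have : (0:ℝ) < 2 * ((i:ℝ)+1) + (β + (j:ℝ) - 1) + (α - β + (j:ℝ) - 1) + 1 := by linarith
        exact this.ne'
      field_simp
      ring
    rw [key]
    -- bound the prefactor q by (2j+α)/css²
    have hq : ((i:ℝ) + 2*(j:ℝ) + α) * ((i:ℝ)+1) * Real.Gamma ((i:ℝ)+(j:ℝ)+1)^2
          / (css^2 * Real.Gamma ((i:ℝ)+(j:ℝ)+α+1)^2) ≤ (2 * (j:ℝ) + α) / css ^ 2 := by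
      have hG8pos : 0 < Real.Gamma ((i:ℝ)+(j:ℝ)+1) := Real.Gamma_pos_of_pos (by linarith)
      have hGm : Real.Gamma ((i:ℝ)+(j:ℝ)+1) ≤ Real.Gamma ((i:ℝ)+(j:ℝ)+α) := by
        apply (Real.Gamma_strictMonoOn_Ici (by simp; linarith) (by simp; linarith)
          (by linarith)).le
      have hGe : Real.Gamma ((i:ℝ)+(j:ℝ)+α+1) = ((i:ℝ)+(j:ℝ)+α) * Real.Gamma ((i:ℝ)+(j:ℝ)+α) :=
        Real.Gamma_add_one (by positivity)
      have hG6pos : 0 < Real.Gamma ((i:ℝ)+(j:ℝ)+α+1) := Real.Gamma_pos_of_pos (by linarith)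
      have hcs2 : 0 < css ^ 2 := by positivity
      rw [div_le_div_iff₀ (by positivity) hcs2]
      have hpoly : ((i:ℝ) + 2*(j:ℝ) + α) * ((i:ℝ)+1) ≤ (2*(j:ℝ)+α) * ((i:ℝ)+(j:ℝ)+α)^2 := by
        nlinarith
      have hsq : Real.Gamma ((i:ℝ)+(j:ℝ)+1)^2 ≤ Real.Gamma ((i:ℝ)+(j:ℝ)+α)^2 := by
        nlinarith
      have hkey : ((i:ℝ) + 2*(j:ℝ) + α) * ((i:ℝ)+1) * Real.Gamma ((i:ℝ)+(j:ℝ)+1)^2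
          ≤ (2*(j:ℝ)+α) * Real.Gamma ((i:ℝ)+(j:ℝ)+α+1)^2 := by
        rw [hGe, mul_pow]
        calc ((i:ℝ) + 2*(j:ℝ) + α) * ((i:ℝ)+1) * Real.Gamma ((i:ℝ)+(j:ℝ)+1)^2
            ≤ (2*(j:ℝ)+α) * ((i:ℝ)+(j:ℝ)+α)^2 * Real.Gamma ((i:ℝ)+(j:ℝ)+α)^2 := by
              apply mul_le_mul hpoly hsq (by positivity) (by positivity)
          _ = (2*(j:ℝ)+α) * (((i:ℝ)+(j:ℝ)+α)^2 * Real.Gamma ((i:ℝ)+(j:ℝ)+α)^2) := by ring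
      nlinarith [hkey, hcs2, hG6pos, mul_le_mul_of_nonneg_right hkey hcs2.le]
    have hhyp : 0 ≤ (f (i + j)) ^ 2 * (Real.Gamma ((i : ℝ) + 2 * (j : ℝ) + α)
          / Real.Gamma ((i : ℝ) + (j : ℝ) + α + 1)) ^ 2
        * normG2 (β + j - 1) (α - β + j - 1) (i + 1)
        / (normG2 β (α - β) (i + j)) ^ 2 := by
      have hN0 : 0 < normG2 (β + j - 1) (α - β + j - 1) (i + 1) :=
        normG2_pos (by push_cast; linarith) (by push_cast; linarith) (by push_cast; linarith) _
      exact div_nonneg (mul_nonneg (mul_nonneg (sq_nonneg _) (sq_nonneg _)) hN0.le) (sq_nonneg _)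
    exact mul_le_mul_of_nonneg_right hq hhyp
end

section
/- Let α, β be reals with 1 < α < 2 and α−1 < β < 1, and let r = sin(πβ)/(sin(π(α−β)) + sin(πβ)). Then for every natural number n: r · Γ(β+n)/Γ(2−α+β+n) + (1−r) · Γ(α−β−n−1)/Γ(1−β−n) = 0. (This cancellation eliminates the hypergeometric terms in the computation of the two-sided fractional integral of (1−x)^{α−β−1} x^{β−1} x^n.) -/
open Real

theorem stmt15 (α β r : ℝ)
    (hα₁ : 1 < α) (hα₂ : α < 2) (hβ₁ : α - 1 < β) (hβ₂ : β < 1)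
    (hr : r = Real.sin (Real.pi * β) /
      (Real.sin (Real.pi * (α - β)) + Real.sin (Real.pi * β)))
    (n : ℕ) :
    r * (Real.Gamma (β + n) / Real.Gamma (2 - α + β + n))
      + (1 - r) * (Real.Gamma (α - β - n - 1) / Real.Gamma (1 - β - n)) = 0 := by
  have hβ0 : 0 < β := by linarith
  have hαβ0 : 0 < α - β := by linarith
  have hαβ1 : α - β < 1 := by linarith
  have hs2 : 0 < Real.sin (Real.pi * β) :=
    Real.sin_pos_of_pos_of_lt_pi (by positivity) (by nlinarith [Real.pi_pos])
  have hs1 : 0 < Real.sin (Real.pi * (α - β)) :=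
    Real.sin_pos_of_pos_of_lt_pi (by positivity) (by nlinarith [Real.pi_pos])
  set s1 := Real.sin (Real.pi * (α - β)) with hs1def
  set s2 := Real.sin (Real.pi * β) with hs2def
  have hS : s1 + s2 ≠ 0 := by positivity
  have e : (-1 : ℝ)^n ≠ 0 := by
    simp
  -- sin values at shifted arguments
  have hsinB : Real.sin (Real.pi * (β + n)) = (-1)^n * s2 := by
    have : Real.pi * (β + n) = Real.pi * β + (n : ℤ) * Real.pi := by push_cast; ring
    rw [this, Real.sin_add_int_mul_pi]
    norm_num
    exact hs2def.symm
  have hsinA : Real.sin (Real.pi * (α - β - n - 1)) = -((-1)^n * s1) := by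
    have : Real.pi * (α - β - n - 1) = Real.pi * (α - β) + (-(n+1) : ℤ) * Real.pi := by
      push_cast; ring
    rw [this, Real.sin_add_int_mul_pi]
    have h2 : ((-1:ℝ)) ^ (-(↑n+1) : ℤ) = -((-1:ℝ)^n) := by
      have h3 : (-(↑n+1) : ℤ) = -((n+1 : ℕ) : ℤ) := by push_cast; ring
      rw [h3, zpow_neg, zpow_natCast, pow_succ]
      rcases neg_one_pow_eq_or ℝ n with h | h <;> rw [h] <;> norm_num
    rw [h2]
    ring
  have hΓβn : 0 < Real.Gamma (β + n) :=
    Real.Gamma_pos_of_pos (by positivity)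
  have hG2 : 0 < Real.Gamma (2 - α + β + n) :=
    Real.Gamma_pos_of_pos (by have : (0:ℝ) ≤ n := n.cast_nonneg; linarith)
  -- reflection formulas
  have E1 : Real.Gamma (α - β - n - 1) * Real.Gamma (2 - α + β + n)
      = Real.pi / (-((-1)^n * s1)) := by
    have := Real.Gamma_mul_Gamma_one_sub (α - β - n - 1)
    rw [hsinA] at this
    convert this using 3
    ring
  have E2 : Real.Gamma (β + n) * Real.Gamma (1 - β - n)
      = Real.pi / ((-1)^n * s2) := by
    have := Real.Gamma_mul_Gamma_one_sub (β + n)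
    rw [hsinB] at this
    convert this using 3
    ring
  have hpi := Real.pi_pos
  have hG1 : Real.Gamma (1 - β - n) ≠ 0 := by
    intro h
    rw [h, mul_zero] at E2
    have : Real.pi / ((-1)^n * s2) ≠ 0 := by
      apply div_ne_zero hpi.ne'
      exact mul_ne_zero e hs2.ne'
    exact this E2.symm
  have key : Real.Gamma (α - β - n - 1) / Real.Gamma (1 - β - n)
      = -(s2 / s1) * (Real.Gamma (β + n) / Real.Gamma (2 - α + β + n)) := by
    have hΓa : Real.Gamma (α - β - n - 1)
        = Real.pi / (-((-1)^n * s1)) / Real.Gamma (2 - α + β + n) := by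
      field_simp at E1 ⊢
      linarith [E1]
    have hΓ1 : Real.Gamma (1 - β - n)
        = Real.pi / ((-1)^n * s2) / Real.Gamma (β + n) := by
      field_simp at E2 ⊢
      linarith [E2]
    rw [hΓa, hΓ1]
    field_simp
  rw [hr, key]
  have h1r : 1 - s2 / (s1 + s2) = s1 / (s1 + s2) := by
    field_simp
    ring
  rw [h1r]
  field_simp
  ring
end
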